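/- The CTC marginal probability of the full target equals the final forward variable: α(S, |y|) = ∑_{w : |w|=S, Γ(w)=y} P(w), where α is computed by the CTC forward recursion. -/

import Mathlib

open Finset

/-- The CTC reduction Γ: merge consecutive equal tokens, then remove blanks. -/
def gammaCTC {σ : Type*} [DecidableEq σ] (ε : σ) (w : List σ) : List σ :=
  (w.destutter (· ≠ ·)).filter (· ≠ ε)

/-- The CTC forward recursion with the `ε`/`¬ε` split: `ctcF P ε y s t = (α^ε(s,t), α^¬ε(s,t))`,
where `α(s,t) = α^ε(s,t) + α^¬ε(s,t)`. -/
noncomputable def ctcF {σ : Type*} [DecidableEq σ]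
    (P : ℕ → σ → NNReal) (ε : σ) (y : List σ) : ℕ → ℕ → NNReal × NNReal
  | 0, 0 => (1, 0)
  | 0, _ + 1 => (0, 0)
  | s + 1, 0 => (((ctcF P ε y s 0).1 + (ctcF P ε y s 0).2) * P (s + 1) ε, 0)
  | s + 1, t + 1 =>
      (((ctcF P ε y s (t + 1)).1 + (ctcF P ε y s (t + 1)).2) * P (s + 1) ε,
        (if 0 < t ∧ y.getD t ε = y.getD (t - 1) ε then
            (ctcF P ε y s t).1 + (ctcF P ε y s (t + 1)).2
          else
            (ctcF P ε y s t).1 + (ctcF P ε y s t).2 + (ctcF P ε y s (t + 1)).2) *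
          P (s + 1) (y.getD t ε))

section CTCAux

variable {σ : Type*} [DecidableEq σ]

private lemma destutter'_concat (c : σ) (l : List σ) : ∀ a : σ,
    List.destutter' (· ≠ ·) a (l ++ [c]) =
      if (a :: l).getLast? = some c then List.destutter' (· ≠ ·) a l
      else List.destutter' (· ≠ ·) a l ++ [c] := by
  induction l with
  | nil =>
      intro a
      by_cases h : a = c <;> simp [List.destutter', h]
  | cons b l ih =>
      intro a
      simp only [List.cons_append, List.destutter', List.append_eq]
      by_cases hab : a ≠ b
      · rw [if_pos hab, if_pos hab, ih b, List.getLast?_cons_cons]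
        split <;> simp
      · push_neg at hab
        subst hab
        rw [if_neg (by simp : ¬ a ≠ a), if_neg (by simp : ¬ a ≠ a), ih a,
          List.getLast?_cons_cons]

private lemma destutter_concat (c : σ) (l : List σ) :
    List.destutter (· ≠ ·) (l ++ [c]) =
      if l.getLast? = some c then List.destutter (· ≠ ·) l
      else List.destutter (· ≠ ·) l ++ [c] := by
  cases l with
  | nil => simp [List.destutter, List.destutter']
  | cons a l => simpa [List.destutter] using destutter'_concat c l a

private lemma destutter'_getLast? (l : List σ) : ∀ a : σ,
    (List.destutter' (· ≠ ·) a l).getLast? = (a :: l).getLast? := by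
  induction l with
  | nil => intro a; simp [List.destutter']
  | cons b l ih =>
      intro a
      rw [List.destutter', List.getLast?_cons_cons]
      by_cases hab : a ≠ b
      · rw [if_pos hab]
        have h1 := ih b
        have hne : List.destutter' (· ≠ ·) b l ≠ [] := List.destutter'_ne_nil l _
        cases h : List.destutter' (· ≠ ·) b l with
        | nil => exact absurd h hne
        | cons x xs => rw [← h, ← h1, h, List.getLast?_cons_cons]
      · push_neg at hab
        subst hab
        rw [if_neg (by simp : ¬ a ≠ a), ih a]

private lemma gamma_concat_blank (ε : σ) (l : List σ) :
    gammaCTC ε (l ++ [ε]) = gammaCTC ε l := by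
  unfold gammaCTC
  rw [destutter_concat]
  split
  · rfl
  · rw [List.filter_append]; simp

private lemma gamma_concat_ne (ε : σ) {c : σ} (hc : c ≠ ε) (l : List σ) :
    gammaCTC ε (l ++ [c]) =
      if l.getLast? = some c then gammaCTC ε l else gammaCTC ε l ++ [c] := by
  unfold gammaCTC
  rw [destutter_concat]
  split
  · simp
  · rw [List.filter_append]; simp [hc]

private lemma gamma_getLast? (ε : σ) (l : List σ) (h : l.getLast?.getD ε ≠ ε) :
    (gammaCTC ε l).getLast? = l.getLast? := by
  cases l with
  | nil => simp at h
  | cons a l' =>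
    cases hx : (a :: l').getLast? with
    | none => simp [List.getLast?_eq_none_iff] at hx
    | some x =>
      rw [hx] at h
      simp only [Option.getD_some] at h
      have hd : (List.destutter (· ≠ ·) (a :: l')).getLast? = some x := by
        rw [List.destutter, destutter'_getLast?, hx]
      obtain ⟨m, hm⟩ := List.getLast?_eq_some_iff.mp hd
      unfold gammaCTC
      rw [hm, List.filter_append]
      simp [h]

private lemma gamma_ne_nil (ε : σ) (l : List σ) (h : l.getLast?.getD ε ≠ ε) :
    gammaCTC ε l ≠ [] := by
  intro hnil
  have hg := gamma_getLast? ε l h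
  rw [hnil] at hg
  cases hx : l.getLast? with
  | none => rw [hx] at h; simp at h
  | some x => rw [hx] at hg; simp at hg

private lemma sum_snoc [Fintype σ] {s : ℕ} (f : (Fin (s+1) → σ) → NNReal) :
    ∑ w : Fin (s+1) → σ, f w = ∑ v : Fin s → σ, ∑ c : σ, f (Fin.snoc v c) := by
  rw [← (Fin.snocEquiv (fun _ => σ)).sum_comp f, Fintype.sum_prod_type, Finset.sum_comm]
  rfl

private lemma ofFn_snoc' {s : ℕ} (v : Fin s → σ) (c : σ) :
    List.ofFn (Fin.snoc v c) = List.ofFn v ++ [c] := by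
  rw [List.ofFn_succ']
  simp

private lemma prod_snoc (P : ℕ → σ → NNReal) {s : ℕ} (v : Fin s → σ) (c : σ) :
    ∏ i : Fin (s+1), P (i.1+1) ((Fin.snoc v c : Fin (s+1) → σ) i) =
      (∏ i : Fin s, P (i.1+1) (v i)) * P (s+1) c := by
  rw [Fin.prod_univ_castSucc (f := fun i => P (i.1+1) ((Fin.snoc v c : Fin (s+1) → σ) i))]
  simp

private lemma take_concat_getD (y : List σ) (ε : σ) {t : ℕ} (ht : t < y.length) :
    y.take (t+1) = y.take t ++ [y.getD t ε] := by
  rw [List.take_succ, List.getElem?_eq_getElem ht, List.getD_eq_getElem y ε ht]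
  rfl

private lemma ite_and_split (A B : Prop) [Decidable A] [Decidable B] (q : NNReal) :
    (if A then q else 0) = (if A ∧ B then q else 0) + (if A ∧ ¬B then q else 0) := by
  by_cases hA : A <;> by_cases hB : B <;> simp [hA, hB]

private lemma ctc_key [Fintype σ]
    (P : ℕ → σ → NNReal) (ε : σ) (y : List σ) (hy : ε ∉ y) :
    ∀ (s : ℕ), ∀ t ≤ y.length,
      ((ctcF P ε y s t).1 = ∑ v : Fin s → σ,
        if gammaCTC ε (List.ofFn v) = y.take t ∧ (List.ofFn v).getLast?.getD ε = ε
        then ∏ i, P (i.1+1) (v i) else 0) ∧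
      ((ctcF P ε y s t).2 = ∑ v : Fin s → σ,
        if gammaCTC ε (List.ofFn v) = y.take t ∧ ¬(List.ofFn v).getLast?.getD ε = ε
        then ∏ i, P (i.1+1) (v i) else 0) := by
  intro s
  induction s with
  | zero =>
      intro t ht
      cases t with
      | zero =>
          constructor <;> simp [ctcF, gammaCTC, List.destutter]
      | succ t =>
          have hynil : y ≠ [] := by
            intro h; rw [h] at ht; simp at ht
          have htake : y.take (t+1) ≠ [] := by
            simp [hynil]
          constructor <;>
            · simp only [ctcF]
              rw [eq_comm, Finset.sum_eq_zero]
              intro v _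
              rw [if_neg]
              rintro ⟨h1, -⟩
              rw [show List.ofFn v = ([] : List σ) from List.ofFn_zero] at h1
              exact htake (h1.symm ▸ rfl)
  | succ s ih =>
      intro t ht
      -- the blank-ending sums (first components), valid for every t' ≤ |y|
      have key1 : ∀ t' ≤ y.length, (∑ v : Fin (s+1) → σ,
          if gammaCTC ε (List.ofFn v) = y.take t' ∧ (List.ofFn v).getLast?.getD ε = ε
          then ∏ i, P (i.1+1) (v i) else 0)
          = ((ctcF P ε y s t').1 + (ctcF P ε y s t').2) * P (s+1) ε := by
        intro t' ht'
        rw [sum_snoc]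
        have hinner : ∀ v : Fin s → σ,
            (∑ c : σ, if gammaCTC ε (List.ofFn (Fin.snoc v c : Fin (s+1) → σ)) = y.take t' ∧
                (List.ofFn (Fin.snoc v c : Fin (s+1) → σ)).getLast?.getD ε = ε
              then ∏ i : Fin (s+1), P (i.1+1) ((Fin.snoc v c : Fin (s+1) → σ) i) else 0)
            = (if gammaCTC ε (List.ofFn v) = y.take t'
               then (∏ i, P (i.1+1) (v i)) else 0) * P (s+1) ε := by
          intro v
          rw [Finset.sum_eq_single ε]
          · rw [ofFn_snoc', gamma_concat_blank, List.getLast?_concat, prod_snoc]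
            simp only [Option.getD_some, and_true]
            split <;> simp
          · intro c _ hc
            rw [ofFn_snoc', List.getLast?_concat, if_neg]
            simp [hc]
          · intro h; exact absurd (Finset.mem_univ ε) h
        rw [Finset.sum_congr rfl (fun v _ => hinner v), ← Finset.sum_mul]
        congr 1
        obtain ⟨h1, h2⟩ := ih t' ht'
        rw [h1, h2, ← Finset.sum_add_distrib]
        exact Finset.sum_congr rfl fun v _ => ite_and_split _ _ _
      cases t with
      | zero =>
          constructor
          · simp only [ctcF]
            exact (key1 0 (Nat.zero_le _)).symm
          · simp only [ctcF]
            rw [eq_comm, Finset.sum_eq_zero]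
            intro v _
            rw [if_neg]
            rintro ⟨h1, h2⟩
            exact gamma_ne_nil ε _ h2 (by simpa using h1)
      | succ t =>
          have htl : t < y.length := ht
          have hbmem : y.getD t ε ∈ y := by
            rw [List.getD_eq_getElem y ε htl]; exact List.getElem_mem htl
          have hb : y.getD t ε ≠ ε := fun h => hy (h ▸ hbmem)
          have htake : y.take (t+1) = y.take t ++ [y.getD t ε] := take_concat_getD y ε htl
          -- any word whose reduction is `y.take t` and whose last letter is not blank
          -- must end in `y.getD (t-1) ε`, and `t` must be positive
          have hforce : ∀ l : List σ, gammaCTC ε l = y.take t →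
              ¬ l.getLast?.getD ε = ε →
              0 < t ∧ l.getLast? = some (y.getD (t-1) ε) := by
            intro l h1 h2
            have hg := gamma_getLast? ε l h2
            rw [h1] at hg
            cases t with
            | zero =>
                exfalso
                exact gamma_ne_nil ε l h2 h1
            | succ u =>
                have hul : u < y.length := Nat.lt_of_le_of_lt (Nat.le_succ u) htl
                rw [take_concat_getD y ε hul, List.getLast?_concat] at hg
                exact ⟨Nat.succ_pos u, by simpa using hg.symm⟩
          constructor
          · simp only [ctcF]
            exact (key1 (t+1) ht).symm
          · simp only [ctcF]
            rw [sum_snoc]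
            -- inner sum over the appended letter
            have hinner : ∀ v : Fin s → σ,
                (∑ c : σ, if gammaCTC ε (List.ofFn (Fin.snoc v c : Fin (s+1) → σ)) = y.take (t+1) ∧
                    ¬(List.ofFn (Fin.snoc v c : Fin (s+1) → σ)).getLast?.getD ε = ε
                  then ∏ i : Fin (s+1), P (i.1+1) ((Fin.snoc v c : Fin (s+1) → σ) i) else 0)
                = ((if gammaCTC ε (List.ofFn v) = y.take (t+1) ∧
                      (List.ofFn v).getLast? = some (y.getD t ε)
                    then ∏ i, P (i.1+1) (v i) else 0)
                  + (if gammaCTC ε (List.ofFn v) = y.take t ∧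
                      ¬ (List.ofFn v).getLast? = some (y.getD t ε)
                    then ∏ i, P (i.1+1) (v i) else 0)) * P (s+1) (y.getD t ε) := by
              intro v
              rw [Finset.sum_eq_single (y.getD t ε)]
              · rw [ofFn_snoc', List.getLast?_concat, prod_snoc, gamma_concat_ne ε hb]
                simp only [Option.getD_some]
                by_cases hlast : (List.ofFn v).getLast? = some (y.getD t ε)
                · rw [if_pos hlast]
                  by_cases hΓ : gammaCTC ε (List.ofFn v) = y.take (t+1)
                  · rw [if_pos ⟨hΓ, hb⟩, if_pos ⟨hΓ, hlast⟩,
                      if_neg (fun h => h.2 hlast), add_zero]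
                  · rw [if_neg (fun h => hΓ h.1), if_neg (fun h => hΓ h.1),
                      if_neg (fun h => h.2 hlast), add_zero, zero_mul]
                · rw [if_neg hlast, htake]
                  by_cases hΓ : gammaCTC ε (List.ofFn v) = y.take t
                  · rw [if_pos ⟨by rw [hΓ], hb⟩, if_neg (fun h => hlast h.2),
                      if_pos ⟨hΓ, hlast⟩, zero_add]
                  · rw [if_neg (fun h => hΓ ((List.append_left_inj _).mp h.1)),
                      if_neg (fun h => hlast h.2), if_neg (fun h => hΓ h.1),
                      add_zero, zero_mul]
              · intro c _ hcb
                rw [ofFn_snoc', List.getLast?_concat, if_neg]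
                simp only [Option.getD_some]
                rintro ⟨h1, h2⟩
                have hg := gamma_getLast? ε (List.ofFn v ++ [c])
                  (by rw [List.getLast?_concat]; simpa using h2)
                rw [h1, htake, List.getLast?_concat, List.getLast?_concat] at hg
                exact hcb (by simpa using hg.symm)
              · intro h; exact absurd (Finset.mem_univ _) h
            rw [Finset.sum_congr rfl (fun v _ => hinner v), ← Finset.sum_mul]
            congr 1
            rw [Finset.sum_add_distrib]
            -- first summand: words already reducing to `y.take (t+1)` and ending in `y.getD t ε`
            have e1 : (∑ v : Fin s → σ,
                if gammaCTC ε (List.ofFn v) = y.take (t+1) ∧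
                    (List.ofFn v).getLast? = some (y.getD t ε)
                then ∏ i, P (i.1+1) (v i) else 0) = (ctcF P ε y s (t+1)).2 := by
              rw [(ih (t+1) ht).2]
              refine Finset.sum_congr rfl fun v _ => ?_
              congr 1
              apply propext
              constructor
              · rintro ⟨h1, h2⟩
                exact ⟨h1, by rw [h2]; simpa using hb⟩
              · rintro ⟨h1, h2⟩
                refine ⟨h1, ?_⟩
                have hg := gamma_getLast? ε (List.ofFn v) h2
                rw [h1, htake, List.getLast?_concat] at hg
                exact hg.symm
            -- second summand splits into the blank-ending and nonblank-ending parts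
            have e2 : (∑ v : Fin s → σ,
                if gammaCTC ε (List.ofFn v) = y.take t ∧
                    ¬ (List.ofFn v).getLast? = some (y.getD t ε)
                then ∏ i, P (i.1+1) (v i) else 0)
                = (ctcF P ε y s t).1 + (∑ v : Fin s → σ,
                    if (gammaCTC ε (List.ofFn v) = y.take t ∧
                        ¬ (List.ofFn v).getLast?.getD ε = ε) ∧
                        ¬ (List.ofFn v).getLast? = some (y.getD t ε)
                    then ∏ i, P (i.1+1) (v i) else 0) := by
              rw [(ih t (Nat.le_of_lt htl)).1, ← Finset.sum_add_distrib]
              refine Finset.sum_congr rfl fun v _ => ?_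
              by_cases hΓ : gammaCTC ε (List.ofFn v) = y.take t
              · by_cases hε : (List.ofFn v).getLast?.getD ε = ε
                · have hnb : ¬ (List.ofFn v).getLast? = some (y.getD t ε) := by
                    intro h; rw [h] at hε; exact hb hε
                  rw [if_pos ⟨hΓ, hnb⟩, if_pos ⟨hΓ, hε⟩,
                    if_neg (fun h => h.1.2 hε), add_zero]
                · have hlast := (hforce _ hΓ hε).2
                  by_cases hnb : (List.ofFn v).getLast? = some (y.getD t ε)
                  · rw [if_neg (fun h => h.2 hnb), if_neg (fun h => hε h.2),
                      if_neg (fun h => h.2 hnb), add_zero]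
                  · rw [if_pos ⟨hΓ, hnb⟩, if_neg (fun h => hε h.2),
                      if_pos ⟨⟨hΓ, hε⟩, hnb⟩, zero_add]
              · rw [if_neg (fun h => hΓ h.1), if_neg (fun h => hΓ h.1),
                  if_neg (fun h => hΓ h.1.1), add_zero]
            rw [e1, e2]
            split_ifs with hc
            · -- repeated label: the leftover sum vanishes
              have hz : (∑ v : Fin s → σ,
                  if (gammaCTC ε (List.ofFn v) = y.take t ∧
                      ¬ (List.ofFn v).getLast?.getD ε = ε) ∧
                      ¬ (List.ofFn v).getLast? = some (y.getD t ε)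
                  then ∏ i, P (i.1+1) (v i) else 0) = 0 := by
                apply Finset.sum_eq_zero
                intro v _
                rw [if_neg]
                rintro ⟨⟨h1, h2⟩, h3⟩
                have := (hforce _ h1 h2).2
                rw [← hc.2] at this
                exact h3 this
              rw [hz, add_zero]
              ring
            · -- non-repeated label: the leftover sum is the full nonblank part
              have hz : (∑ v : Fin s → σ,
                  if (gammaCTC ε (List.ofFn v) = y.take t ∧
                      ¬ (List.ofFn v).getLast?.getD ε = ε) ∧
                      ¬ (List.ofFn v).getLast? = some (y.getD t ε)
                  then ∏ i, P (i.1+1) (v i) else 0) = (ctcF P ε y s t).2 := by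
                rw [(ih t (Nat.le_of_lt htl)).2]
                refine Finset.sum_congr rfl fun v _ => ?_
                congr 1
                apply propext
                constructor
                · rintro ⟨h, -⟩; exact h
                · rintro ⟨h1, h2⟩
                  refine ⟨⟨h1, h2⟩, ?_⟩
                  obtain ⟨hpos, hlast⟩ := hforce _ h1 h2
                  rw [hlast]
                  intro h
                  exact hc ⟨hpos, by simpa using h.symm⟩
              rw [hz]
              ring

end CTCAux

/-- The CTC marginal probability of the full target equals the final forward
variable: `α(S,|y|) = ∑_{w : |w|=S, Γ(w)=y} P(w)`, where `α` is computed by the CTC forward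
recursion and `P(w)` is the product of the per-slot probabilities. -/
theorem ctc_forward_eq_marginal {σ : Type*} [Fintype σ] [DecidableEq σ]
    (P : ℕ → σ → NNReal) (ε : σ) (y : List σ) (hy : ε ∉ y) (S : ℕ) :
    (ctcF P ε y S y.length).1 + (ctcF P ε y S y.length).2 =
      ∑ w : Fin S → σ,
        if gammaCTC ε (List.ofFn w) = y then ∏ i, P (i.1 + 1) (w i) else 0 := by
  obtain ⟨h1, h2⟩ := ctc_key P ε y hy S y.length le_rfl
  rw [h1, h2, ← Finset.sum_add_distrib]
  refine Finset.sum_congr rfl fun v _ => ?_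
  rw [List.take_length, ← ite_and_split]
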